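/- Let G be a finite group and x a nontrivial element of G that does not generate G, such that for every y ∈ G, either x ∈ ⟨y⟩ or y ∈ ⟨x⟩. Then G has a unique minimal (i.e., unique subgroup of prime order) subgroup; in particular G is a p-group for some prime p. -/
import Mathlib

open Subgroup

/-- If the order of `x` has two distinct prime factors and every element is
comparable with `x`, then every element lies in `⟨x⟩`. -/
lemma aux_all_mem_zpowers {G : Type*} [Group G] [Finite G] (x : G)
    (h : ∀ y : G, x ∈ Subgroup.zpowers y ∨ y ∈ Subgroup.zpowers x)
    {p q : ℕ} (hp : p.Prime) (hq : q.Prime) (hpq : p ≠ q)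
    (hpn : p ∣ orderOf x) (hqn : q ∣ orderOf x) :
    ∀ y : G, y ∈ Subgroup.zpowers x := by
  have key : ∀ m : ℕ, ∀ y : G, orderOf y = m → y ∈ Subgroup.zpowers x := by
    intro m
    induction m using Nat.strong_induction_on with
    | _ m ih =>
      intro y hy
      by_cases hmem : y ∈ Subgroup.zpowers x
      · exact hmem
      have hx' : x ∈ Subgroup.zpowers y := (h y).resolve_right hmem
      have hdvd : orderOf x ∣ m := hy ▸ orderOf_dvd_of_mem_zpowers hx'
      have hm0 : m ≠ 0 := hy ▸ (orderOf_pos y).ne'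
      have hpm : p ∣ m := hpn.trans hdvd
      have hqm : q ∣ m := hqn.trans hdvd
      set a := p ^ m.factorization p with ha_def
      set b := ordCompl[p] m with hb_def
      have hab : a * b = m := Nat.ordProj_mul_ordCompl_eq_self m p
      have hco : Nat.Coprime a b := (Nat.coprime_ordCompl hp hm0).pow_left _
      have ha1 : 1 < a :=
        hp.one_lt.trans_le
          (Nat.le_self_pow (hp.factorization_pos_of_dvd hm0 hpm).ne' p)
      have hb0 : 0 < b := Nat.ordCompl_pos p hm0
      have hqb : q ∣ b := by
        have : q ∣ a * b := hab ▸ hqm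
        rcases (Nat.Prime.dvd_mul hq).mp this with hqa | hqb
        · exact absurd ((Nat.prime_dvd_prime_iff_eq hq hp).mp
            (hq.dvd_of_dvd_pow hqa)) hpq.symm
        · exact hqb
      have hb1 : 1 < b := hq.one_lt.trans_le (Nat.le_of_dvd hb0 hqb)
      have ha0 : 0 < a := lt_trans one_pos ha1
      -- Bezout
      obtain ⟨u, v, huv⟩ : ∃ u v : ℤ, (a : ℤ) * u + (b : ℤ) * v = 1 := by
        refine ⟨Nat.gcdA a b, Nat.gcdB a b, ?_⟩
        have := Nat.gcd_eq_gcd_ab a b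
        rw [hco] at this
        exact_mod_cast this.symm
      set z1 := y ^ ((a : ℤ) * u) with hz1
      set z2 := y ^ ((b : ℤ) * v) with hz2
      have hz : z1 * z2 = y := by
        rw [hz1, hz2, ← zpow_add, huv, zpow_one]
      have hym : y ^ (m : ℤ) = 1 := by
        rw [zpow_natCast, ← hy, pow_orderOf_eq_one]
      have h1 : orderOf z1 ∣ b := by
        apply orderOf_dvd_of_pow_eq_one
        rw [hz1, ← zpow_natCast, ← zpow_mul]
        have : (a : ℤ) * u * b = (m : ℤ) * u := by
          rw [← hab]; push_cast; ring
        rw [this, zpow_mul, hym, one_zpow]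
      have h2 : orderOf z2 ∣ a := by
        apply orderOf_dvd_of_pow_eq_one
        rw [hz2, ← zpow_natCast, ← zpow_mul]
        have : (b : ℤ) * v * a = (m : ℤ) * v := by
          rw [← hab]; push_cast; ring
        rw [this, zpow_mul, hym, one_zpow]
      have hlt1 : orderOf z1 < m := by
        calc orderOf z1 ≤ b := Nat.le_of_dvd hb0 h1
        _ < m := by nlinarith
      have hlt2 : orderOf z2 < m := by
        calc orderOf z2 ≤ a := Nat.le_of_dvd ha0 h2
        _ < m := by nlinarith
      rw [← hz]
      exact mul_mem (ih _ hlt1 z1 rfl) (ih _ hlt2 z2 rfl)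
  exact fun y => key (orderOf y) y rfl

/-- If `x ≠ 1` does not generate the finite group `G` and for every
`y` either `x ∈ ⟨y⟩` or `y ∈ ⟨x⟩`, then `G` has a unique subgroup of prime order;
in particular `G` is a `p`-group for some prime `p`. -/
theorem unique_minimal_subgroup_of_comparable_cyclic
    {G : Type*} [Group G] [Finite G] (x : G) (hx : x ≠ 1)
    (hxG : Subgroup.zpowers x ≠ ⊤)
    (h : ∀ y : G, x ∈ Subgroup.zpowers y ∨ y ∈ Subgroup.zpowers x) :
    (∃! H : Subgroup G, ∃ q : ℕ, q.Prime ∧ Nat.card H = q) ∧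
      ∃ p : ℕ, p.Prime ∧ IsPGroup p G := by
  have hn0 : orderOf x ≠ 0 := (orderOf_pos x).ne'
  have hn1 : orderOf x ≠ 1 := by
    simpa [orderOf_eq_one_iff] using hx
  -- the order of `x` is a prime power
  obtain ⟨p, k, hp, hk, hnpk⟩ : ∃ p k : ℕ, p.Prime ∧ 0 < k ∧ orderOf x = p ^ k := by
    set P := (orderOf x).minFac with hP
    have hp : P.Prime := Nat.minFac_prime hn1
    by_cases hall : ∀ d : ℕ, d.Prime → d ∣ orderOf x → d = P
    · refine ⟨P, _, hp, ?_, Nat.eq_prime_pow_of_unique_prime_dvd hn0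
        (fun {d} hd hdd => hall d hd hdd)⟩
      by_contra hk0
      push_neg at hk0
      have h0 : (orderOf x).primeFactorsList.length = 0 := Nat.le_zero.mp hk0
      rw [Nat.eq_prime_pow_of_unique_prime_dvd hn0
        (fun {d} hd hdd => hall d hd hdd), h0, pow_zero] at hn1
      exact hn1 rfl
    · push_neg at hall
      obtain ⟨d, hd, hdd, hdP⟩ := hall
      exact absurd ((Subgroup.eq_top_iff' _).mpr
        (aux_all_mem_zpowers x h hd hp hdP hdd (orderOf x).minFac_dvd)) hxG
  have hpk1 : 1 < p ^ k := one_lt_pow₀ hp.one_lt hk.ne'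
  have hppk : p ∣ p ^ k := dvd_pow_self p hk.ne'
  -- every element of prime order has order `p` and lies in `⟨x⟩`
  have hC : ∀ z : G, (orderOf z).Prime → orderOf z = p ∧ z ∈ Subgroup.zpowers x := by
    intro z hz
    rcases h z with hxz | hzx
    · have hdvd : orderOf x ∣ orderOf z := orderOf_dvd_of_mem_zpowers hxz
      have hpz : p ∣ orderOf z := (hnpk ▸ hppk).trans hdvd
      have hzp : orderOf z = p := ((Nat.prime_dvd_prime_iff_eq hp hz).mp hpz).symm
      have hle : Subgroup.zpowers x ≤ Subgroup.zpowers z := zpowers_le.mpr hxz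
      have hcard : Nat.card (Subgroup.zpowers z) ≤ Nat.card (Subgroup.zpowers x) := by
        rw [Nat.card_zpowers, Nat.card_zpowers, hzp, hnpk]
        exact Nat.le_self_pow hk.ne' p
      have := Subgroup.eq_of_le_of_card_ge hle hcard
      exact ⟨hzp, this ▸ Subgroup.mem_zpowers z⟩
    · have hdvd : orderOf z ∣ p ^ k := hnpk ▸ orderOf_dvd_of_mem_zpowers hzx
      exact ⟨(Nat.prime_dvd_prime_iff_eq hz hp).mp (hz.dvd_of_dvd_pow hdvd), hzx⟩
  -- G is a p-group
  have hPG : IsPGroup p G := by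
    intro g
    have hg0 : orderOf g ≠ 0 := (orderOf_pos g).ne'
    have : orderOf g = p ^ (orderOf g).primeFactorsList.length := by
      refine Nat.eq_prime_pow_of_unique_prime_dvd hg0 (fun {d} hd hdd => ?_)
      have hw : orderOf (g ^ (orderOf g / d)) = d := by
        rw [orderOf_pow]
        rw [Nat.gcd_eq_right (Nat.div_dvd_of_dvd hdd),
          Nat.div_div_self hdd hg0]
      have h2 := (hC _ (by rw [hw]; exact hd)).1
      rwa [hw] at h2
    exact ⟨_, by rw [← this, pow_orderOf_eq_one]⟩
  -- the unique minimal subgroup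
  set w := x ^ p ^ (k - 1) with hw_def
  have hw : orderOf w = p := by
    rw [hw_def, orderOf_pow, hnpk,
      Nat.gcd_eq_right (pow_dvd_pow p (Nat.sub_le k 1)),
      Nat.pow_div (Nat.sub_le k 1) hp.pos, Nat.sub_sub_self hk, pow_one]
  have hwmem : ∀ z : G, z ∈ Subgroup.zpowers x → orderOf z = p →
      z ∈ Subgroup.zpowers w := by
    intro z hz hzp
    obtain ⟨t, ht⟩ := hz
    have ht' : x ^ t = z := ht
    subst ht'
    have hzp1 : (x ^ t) ^ (p : ℤ) = 1 := by
      rw [zpow_natCast, ← hzp]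
      exact pow_orderOf_eq_one (x ^ t)
    have hdvd : ((p : ℤ) ^ k) ∣ t * p := by
      rw [← zpow_mul] at hzp1
      have := orderOf_dvd_iff_zpow_eq_one.mpr hzp1
      rw [hnpk] at this
      exact_mod_cast this
    have hdvd' : ((p : ℤ) ^ (k - 1)) ∣ t := by
      have hkk : (p : ℤ) ^ k = (p : ℤ) ^ (k - 1) * p := by
        rw [← pow_succ, Nat.sub_add_cancel hk]
      rw [hkk] at hdvd
      have hp0 : (p : ℤ) ≠ 0 := by exact_mod_cast hp.pos.ne'
      exact (mul_dvd_mul_iff_right hp0).mp hdvd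
    obtain ⟨s, hs⟩ := hdvd'
    refine ⟨s, ?_⟩
    show w ^ s = x ^ t
    rw [hw_def, ← zpow_natCast, ← zpow_mul, hs]
    push_cast
    ring_nf
  refine ⟨⟨Subgroup.zpowers w, ⟨p, hp, by rw [Nat.card_zpowers, hw]⟩, ?_⟩, p, hp, hPG⟩
  rintro K ⟨q, hq, hK⟩
  haveI : Fact q.Prime := ⟨hq⟩
  obtain ⟨g, hg⟩ := exists_prime_orderOf_dvd_card' (G := K) q (by rw [hK])
  have hg' : orderOf (g : G) = q := by rw [orderOf_coe, hg]
  have hgK : Subgroup.zpowers (g : G) ≤ K := zpowers_le.mpr g.2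
  have hgKeq : Subgroup.zpowers (g : G) = K := by
    apply Subgroup.eq_of_le_of_card_ge hgK
    rw [Nat.card_zpowers, hg', hK]
  obtain ⟨hgp, hgx⟩ := hC (g : G) (hg' ▸ hq)
  have hgw : Subgroup.zpowers (g : G) = Subgroup.zpowers w := by
    apply Subgroup.eq_of_le_of_card_ge (zpowers_le.mpr (hwmem _ hgx hgp))
    rw [Nat.card_zpowers, Nat.card_zpowers, hw, hgp]
  rw [← hgKeq, hgw]
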